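/- Let p_d(T) and p_{d_I}(T) be the 1D absorption probabilities erfc(d/(2√(DT))) and erfc(d_I/(2√(DT))) with 0 < d < d_I. Then for every T > 0, p_d(T) > p_{d_I}(T), and the ratio p_{d_I}(T)/p_d(T) is strictly increasing in T with limit 1 as T → ∞. -/

import Mathlib

open Filter Topology

noncomputable def erf (x : ℝ) : ℝ := (2 / Real.sqrt Real.pi) * ∫ t in (0:ℝ)..x, Real.exp (-t ^ 2)

noncomputable def erfc (x : ℝ) : ℝ := 1 - erf x

open Real MeasureTheory Set

lemma gauss_cont : Continuous fun t : ℝ => Real.exp (-t ^ 2) := by continuity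

lemma gauss_integrable : Integrable fun t : ℝ => Real.exp (-t ^ 2) := by
  simpa using integrable_exp_neg_mul_sq (by norm_num : (0:ℝ) < 1)

lemma gauss_Ioi0 : ∫ t in Ioi (0:ℝ), Real.exp (-t ^ 2) = Real.sqrt Real.pi / 2 := by
  simpa using integral_gaussian_Ioi 1

lemma sqrtpi_pos : 0 < Real.sqrt Real.pi := Real.sqrt_pos.2 Real.pi_pos

lemma erf_hasDerivAt (x : ℝ) :
    HasDerivAt erf (2 / Real.sqrt Real.pi * Real.exp (-x ^ 2)) x := by
  have h := (gauss_cont.integral_hasStrictDerivAt 0 x).hasDerivAt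
  exact h.const_mul _

lemma erfc_hasDerivAt (x : ℝ) :
    HasDerivAt erfc (-(2 / Real.sqrt Real.pi * Real.exp (-x ^ 2))) x :=
  (erf_hasDerivAt x).const_sub 1

lemma tail_pos (x : ℝ) : 0 < ∫ t in Ioi x, Real.exp (-t ^ 2) := by
  have h1 : (0:ℝ) < ∫ t in x..(x+1), Real.exp (-t ^ 2) := by
    apply intervalIntegral.intervalIntegral_pos_of_pos_on gauss_integrable.intervalIntegrable
    · intro t _; exact Real.exp_pos _
    · linarith
  have h2 : ∫ t in x..(x+1), Real.exp (-t ^ 2) ≤ ∫ t in Ioi x, Real.exp (-t ^ 2) := by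
    rw [intervalIntegral.integral_of_le (by linarith)]
    apply setIntegral_mono_set gauss_integrable.integrableOn
    · filter_upwards with t using (Real.exp_pos _).le
    · filter_upwards with t using fun ht => ht.1
  linarith

lemma gauss_split {x : ℝ} (hx : 0 ≤ x) :
    (∫ t in (0:ℝ)..x, Real.exp (-t ^ 2)) + ∫ t in Ioi x, Real.exp (-t ^ 2)
      = Real.sqrt Real.pi / 2 := by
  rw [intervalIntegral.integral_of_le hx, ← gauss_Ioi0,
    ← setIntegral_union (Ioc_disjoint_Ioi le_rfl) measurableSet_Ioi
      gauss_integrable.integrableOn gauss_integrable.integrableOn,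
    Ioc_union_Ioi_eq_Ioi hx]

lemma erf_lt_one (x : ℝ) : erf x < 1 := by
  rcases le_or_gt x 0 with hx | hx
  · have h : (∫ t in (0:ℝ)..x, Real.exp (-t ^ 2)) ≤ 0 := by
      rw [intervalIntegral.integral_symm, neg_nonpos]
      exact intervalIntegral.integral_nonneg hx (fun t _ => (Real.exp_pos _).le)
    have : erf x ≤ 0 := mul_nonpos_of_nonneg_of_nonpos
      (by positivity) h
    linarith
  · have hs := gauss_split hx.le
    have ht := tail_pos x
    have h : (∫ t in (0:ℝ)..x, Real.exp (-t ^ 2)) < Real.sqrt Real.pi / 2 := by linarith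
    have : erf x < (2 / Real.sqrt Real.pi) * (Real.sqrt Real.pi / 2) :=
      mul_lt_mul_of_pos_left h (by positivity)
    have heq : (2 / Real.sqrt Real.pi) * (Real.sqrt Real.pi / 2) = 1 := by
      field_simp
    linarith

lemma erfc_pos (x : ℝ) : 0 < erfc x := sub_pos.2 (erf_lt_one x)

lemma erfc_eq_Ioi {x : ℝ} (hx : 0 ≤ x) :
    erfc x = 2 / Real.sqrt Real.pi * ∫ t in Ioi x, Real.exp (-t ^ 2) := by
  have hs := gauss_split hx
  have heq : (2 / Real.sqrt Real.pi) * (Real.sqrt Real.pi / 2) = 1 := by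
    field_simp
  have : erfc x = 2 / Real.sqrt Real.pi *
      (Real.sqrt Real.pi / 2 - ∫ t in (0:ℝ)..x, Real.exp (-t ^ 2)) := by
    rw [erfc, erf, mul_sub, heq]
  rw [this]; congr 1; linarith

lemma int_t_gauss (x : ℝ) :
    ∫ t in Ioi x, t * Real.exp (-t ^ 2) = Real.exp (-x ^ 2) / 2 := by
  have hderiv : ∀ t ∈ Ici x, HasDerivAt (fun t : ℝ => -Real.exp (-t ^ 2) / 2)
      (t * Real.exp (-t ^ 2)) t := by
    intro t _
    have := (((hasDerivAt_pow 2 t).neg).exp).neg.div_const 2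
    exact this.congr_deriv (by simp only [Pi.neg_apply]; ring)
  have hint : IntegrableOn (fun t : ℝ => t * Real.exp (-t ^ 2)) (Ioi x) := by
    have := integrable_mul_exp_neg_mul_sq (by norm_num : (0:ℝ) < 1)
    simpa using this.integrableOn
  have htend : Tendsto (fun t : ℝ => -Real.exp (-t ^ 2) / 2) atTop (𝓝 0) := by
    have h1 : Tendsto (fun t : ℝ => -t ^ 2) atTop atBot :=
      tendsto_neg_atTop_atBot.comp (tendsto_pow_atTop two_ne_zero)
    have h2 : Tendsto (fun t : ℝ => Real.exp (-t ^ 2)) atTop (𝓝 0) :=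
      Real.tendsto_exp_atBot.comp h1
    have := (h2.neg).div_const 2
    simpa using this
  have := integral_Ioi_of_hasDerivAt_of_tendsto' hderiv hint htend
  rw [this]; ring

lemma mills {x : ℝ} (hx : 0 < x) :
    2 * x * erfc x ≤ 2 / Real.sqrt Real.pi * Real.exp (-x ^ 2) := by
  have hmono : (∫ t in Ioi x, Real.exp (-t ^ 2)) ≤ ∫ t in Ioi x, t / x * Real.exp (-t ^ 2) := by
    apply setIntegral_mono_on gauss_integrable.integrableOn
    · have : IntegrableOn (fun t : ℝ => x⁻¹ * (t * Real.exp (-t ^ 2))) (Ioi x) := by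
        apply Integrable.const_mul
        have := integrable_mul_exp_neg_mul_sq (by norm_num : (0:ℝ) < 1)
        exact (by simpa using this.integrableOn : IntegrableOn (fun t : ℝ => t * Real.exp (-t ^ 2)) (Ioi x))
      apply this.congr_fun _ measurableSet_Ioi
      intro t _; field_simp
    · exact measurableSet_Ioi
    · intro t ht
      have h1 : 1 ≤ t / x := (one_le_div hx).2 (le_of_lt ht)
      nlinarith [Real.exp_pos (-t ^ 2)]
  have hval : (∫ t in Ioi x, t / x * Real.exp (-t ^ 2)) = x⁻¹ * (Real.exp (-x ^ 2) / 2) := by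
    rw [← int_t_gauss x, ← integral_const_mul]
    congr 1; ext t; field_simp
  rw [erfc_eq_Ioi hx.le]
  rw [hval] at hmono
  have h2 : 2 * x * (2 / Real.sqrt Real.pi * ∫ t in Ioi x, Real.exp (-t ^ 2))
      ≤ 2 * x * (2 / Real.sqrt Real.pi * (x⁻¹ * (Real.exp (-x ^ 2) / 2))) := by
    have hc : (0:ℝ) ≤ 2 * x * (2 / Real.sqrt Real.pi) := by positivity
    nlinarith [sqrtpi_pos]
  calc 2 * x * (2 / Real.sqrt Real.pi * ∫ t in Ioi x, Real.exp (-t ^ 2))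
      ≤ 2 * x * (2 / Real.sqrt Real.pi * (x⁻¹ * (Real.exp (-x ^ 2) / 2))) := h2
    _ = 2 / Real.sqrt Real.pi * Real.exp (-x ^ 2) := by field_simp

noncomputable def Fa (x : ℝ) : ℝ := Real.log x - x ^ 2 - Real.log (erfc x)

lemma Fa_hasDerivAt {x : ℝ} (hx : 0 < x) :
    HasDerivAt Fa (x⁻¹ - 2 * x + 2 / Real.sqrt Real.pi * Real.exp (-x ^ 2) / erfc x) x := by
  have h1 := Real.hasDerivAt_log (ne_of_gt hx)
  have h2 := hasDerivAt_pow 2 x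
  have h3 := (erfc_hasDerivAt x).log (erfc_pos x).ne'
  have := (h1.sub h2).sub h3
  exact this.congr_deriv (by ring)

lemma Fa_strictMono : StrictMonoOn Fa (Ioi 0) := by
  apply strictMonoOn_of_deriv_pos (convex_Ioi 0)
  · intro x hx
    exact (Fa_hasDerivAt hx).continuousAt.continuousWithinAt
  · intro x hx
    rw [interior_Ioi] at hx
    rw [(Fa_hasDerivAt hx).deriv]
    have hm := mills hx
    have he := erfc_pos x
    have : 2 * x ≤ 2 / Real.sqrt Real.pi * Real.exp (-x ^ 2) / erfc x := by
      rw [le_div_iff₀ he]; linarith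
    have : 0 < x⁻¹ := inv_pos.2 hx
    linarith

lemma key_ineq {u v : ℝ} (hu : 0 < u) (huv : u < v) :
    u * Real.exp (-u ^ 2) / erfc u < v * Real.exp (-v ^ 2) / erfc v := by
  have hv : 0 < v := hu.trans huv
  have hF := Fa_strictMono (mem_Ioi.2 hu) (mem_Ioi.2 hv) huv
  have h1 : Real.exp (Fa u) < Real.exp (Fa v) := Real.exp_lt_exp.2 hF
  have he : ∀ w : ℝ, 0 < w → Real.exp (Fa w) = w * Real.exp (-w ^ 2) / erfc w := by
    intro w hw
    rw [Fa, Real.exp_sub, Real.exp_sub, Real.exp_log hw, Real.exp_log (erfc_pos w)]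
    rw [Real.exp_neg]
    field_simp
  rwa [he u hu, he v hv] at h1

lemma ratio_strictAnti {a b : ℝ} (ha : 0 < a) (hab : a < b) :
    StrictAntiOn (fun s : ℝ => erfc (b * s) / erfc (a * s)) (Ioi 0) := by
  have hb : 0 < b := ha.trans hab
  set c := 2 / Real.sqrt Real.pi with hc
  have hcpos : 0 < c := by rw [hc]; positivity
  have hG : StrictAntiOn (fun s : ℝ => Real.log (erfc (b * s)) - Real.log (erfc (a * s)))
      (Ioi 0) := by
    have hder : ∀ s : ℝ, 0 < s →
        HasDerivAt (fun s : ℝ => Real.log (erfc (b * s)) - Real.log (erfc (a * s)))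
          (-(c * Real.exp (-(b * s) ^ 2)) * b / erfc (b * s)
            - -(c * Real.exp (-(a * s) ^ 2)) * a / erfc (a * s)) s := by
      intro s hs
      have hb1 : HasDerivAt (fun s : ℝ => erfc (b * s)) (-(c * Real.exp (-(b * s) ^ 2)) * b) s :=
        (erfc_hasDerivAt (b * s)).comp s ((hasDerivAt_id s).const_mul b) |>.congr_deriv (by
          simp [hc])
      have ha1 : HasDerivAt (fun s : ℝ => erfc (a * s)) (-(c * Real.exp (-(a * s) ^ 2)) * a) s :=
        (erfc_hasDerivAt (a * s)).comp s ((hasDerivAt_id s).const_mul a) |>.congr_deriv (by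
          simp [hc])
      exact (hb1.log (erfc_pos _).ne').sub (ha1.log (erfc_pos _).ne')
    apply strictAntiOn_of_deriv_neg (convex_Ioi 0)
    · intro s hs
      exact (hder s hs).continuousAt.continuousWithinAt
    · intro s hs
      rw [interior_Ioi] at hs
      rw [(hder s hs).deriv]
      have hAs : 0 < a * s := mul_pos ha hs
      have hBs : 0 < b * s := mul_pos hb hs
      have key := key_ineq hAs (mul_lt_mul_of_pos_right hab hs)
      have Ea := erfc_pos (a * s)
      have Eb := erfc_pos (b * s)
      rw [div_lt_div_iff₀ Ea Eb] at key
      have key2 : a * Real.exp (-(a * s) ^ 2) * erfc (b * s)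
          < b * Real.exp (-(b * s) ^ 2) * erfc (a * s) := by nlinarith
      have h3 : -(c * Real.exp (-(b * s) ^ 2)) * b / erfc (b * s)
            < -(c * Real.exp (-(a * s) ^ 2)) * a / erfc (a * s) := by
        rw [div_lt_div_iff₀ Eb Ea]
        nlinarith
      linarith
  intro s1 hs1 s2 hs2 h12
  have h := hG hs1 hs2 h12
  have he : ∀ s : ℝ, Real.exp (Real.log (erfc (b * s)) - Real.log (erfc (a * s)))
      = erfc (b * s) / erfc (a * s) := by
    intro s
    rw [Real.exp_sub, Real.exp_log (erfc_pos _), Real.exp_log (erfc_pos _)]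
  have := Real.exp_lt_exp.2 h
  rwa [he, he] at this

lemma erfc_strictAnti : StrictAnti erfc := by
  have h : StrictMono erf := by
    apply strictMono_of_deriv_pos
    intro x
    rw [(erf_hasDerivAt x).deriv]
    positivity
  intro x y hxy
  exact sub_lt_sub_left (h hxy) 1

lemma erfc_zero : erfc 0 = 1 := by
  simp [erfc, erf]

theorem stmt_15 (d dI D : ℝ) (hd : 0 < d) (hddI : d < dI) (hD : 0 < D) :
    (∀ T > (0:ℝ), erfc (d / (2 * Real.sqrt (D * T))) > erfc (dI / (2 * Real.sqrt (D * T)))) ∧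
    StrictMonoOn (fun T : ℝ =>
      erfc (dI / (2 * Real.sqrt (D * T))) / erfc (d / (2 * Real.sqrt (D * T)))) (Set.Ioi 0) ∧
    Tendsto (fun T : ℝ =>
      erfc (dI / (2 * Real.sqrt (D * T))) / erfc (d / (2 * Real.sqrt (D * T)))) atTop (𝓝 1) := by
  have hden : ∀ T : ℝ, 0 < T → 0 < 2 * Real.sqrt (D * T) := by
    intro T hT
    have : 0 < D * T := mul_pos hD hT
    positivity
  refine ⟨?_, ?_, ?_⟩
  · intro T hT
    exact erfc_strictAnti (div_lt_div_of_pos_right hddI (hden T hT))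
  · intro T1 hT1 T2 hT2 h12
    have hT1' : (0:ℝ) < T1 := hT1
    have hT2' : (0:ℝ) < T2 := hT2
    have hs1 : (0:ℝ) < (2 * Real.sqrt (D * T1))⁻¹ := inv_pos.2 (hden T1 hT1')
    have hs2 : (0:ℝ) < (2 * Real.sqrt (D * T2))⁻¹ := inv_pos.2 (hden T2 hT2')
    have hlt : (2 * Real.sqrt (D * T2))⁻¹ < (2 * Real.sqrt (D * T1))⁻¹ := by
      apply inv_strictAnti₀ (hden T1 hT1')
      have : Real.sqrt (D * T1) < Real.sqrt (D * T2) :=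
        Real.sqrt_lt_sqrt (le_of_lt (mul_pos hD hT1')) (by nlinarith)
      linarith
    have := ratio_strictAnti hd hddI (mem_Ioi.2 hs2) (mem_Ioi.2 hs1) hlt
    simpa [div_eq_mul_inv] using this
  · have harg : ∀ a : ℝ, Tendsto (fun T : ℝ => a / (2 * Real.sqrt (D * T))) atTop (𝓝 0) := by
      intro a
      apply Tendsto.div_atTop tendsto_const_nhds
      apply Tendsto.const_mul_atTop two_pos
      have hsq : Tendsto Real.sqrt atTop atTop := by
        apply tendsto_atTop_atTop_of_monotone
        · intro x y h; exact Real.sqrt_le_sqrt h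
        · intro b; exact ⟨b ^ 2, by rw [Real.sqrt_sq_eq_abs]; exact le_abs_self b⟩
      exact hsq.comp (Tendsto.const_mul_atTop hD tendsto_id)
    have hcont : ContinuousAt erfc 0 := (erfc_hasDerivAt 0).continuousAt
    have h1 : Tendsto (fun T : ℝ => erfc (dI / (2 * Real.sqrt (D * T)))) atTop (𝓝 1) := by
      have := hcont.tendsto.comp (harg dI)
      rwa [erfc_zero] at this
    have h2 : Tendsto (fun T : ℝ => erfc (d / (2 * Real.sqrt (D * T)))) atTop (𝓝 1) := by
      have := hcont.tendsto.comp (harg d)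
      rwa [erfc_zero] at this
    have := h1.div h2 one_ne_zero
    rw [div_one] at this; exact this
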